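/- For every n ≥ 1 there exists a constant B > 0 with the following property: for every n×n real positive definite matrix T there exists γ ∈ SL_n(ℤ) such that, viewing γ as a real matrix by casting entries, (γᵀ · T · γ)₀₀ ≤ B · det(T)^{1/n}. -/

import Mathlib

open Matrix Submodule MeasureTheory


lemma prim_ext {n : ℕ} (hn : 1 ≤ n) (c : Fin n → ℤ) (hc : c ≠ 0)
    (hprim : Finset.univ.gcd c = 1) :
    ∃ M : Matrix (Fin n) (Fin n) ℤ, IsUnit M.det ∧ ∀ i, M i ⟨0, hn⟩ = c i := by
  classical
  set i0 : Fin n := ⟨0, hn⟩ with hi0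
  set N : Submodule ℤ (Fin n → ℤ) := Submodule.span ℤ {c} with hN
  haveI : NoZeroSMulDivisors ℤ ((Fin n → ℤ) ⧸ N) := by
    constructor
    rintro k q hkq
    by_cases hk : k = 0
    · exact Or.inl hk
    refine Or.inr ?_
    obtain ⟨y, rfl⟩ := N.mkQ_surjective q
    rw [← _root_.map_smul, Submodule.mkQ_apply, Submodule.Quotient.mk_eq_zero] at hkq
    obtain ⟨m, hm⟩ := Submodule.mem_span_singleton.mp hkq
    have hdvd : k ∣ m := by
      have h1 : k ∣ Finset.univ.gcd (fun i => m * c i) := by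
        refine Finset.dvd_gcd fun i _ => ?_
        refine ⟨y i, ?_⟩
        have := congrFun hm i
        simpa [Pi.smul_apply, smul_eq_mul, mul_comm] using this
      rw [Finset.gcd_mul_left, hprim, mul_one] at h1
      rw [← Int.abs_eq_normalize] at h1
      exact (dvd_abs k m).mp h1
    obtain ⟨t, rfl⟩ := hdvd
    have hy : y = t • c := by
      have h2 : k • y = k • (t • c) := by
        rw [← hm, smul_smul, mul_comm]
      exact (smul_right_injective _ hk h2.symm).symm ▸ rfl
    rw [Submodule.mkQ_apply, Submodule.Quotient.mk_eq_zero, hy]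
    exact Submodule.smul_mem _ _ (Submodule.mem_span_singleton_self c)
  haveI : Module.Free ℤ ((Fin n → ℤ) ⧸ N) :=
    Module.free_of_finite_type_torsion_free'
  obtain ⟨s, hs⟩ := Module.projective_lifting_property N.mkQ LinearMap.id N.mkQ_surjective
  set φ : (N × ((Fin n → ℤ) ⧸ N)) →ₗ[ℤ] (Fin n → ℤ) := N.subtype.coprod s with hφ
  have hπs : ∀ b, N.mkQ (s b) = b := fun b => LinearMap.congr_fun hs b
  have hbij : Function.Bijective φ := by
    constructor
    · rintro ⟨⟨a, ha⟩, b⟩ ⟨⟨a', ha'⟩, b'⟩ hab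
      simp only [hφ, LinearMap.coprod_apply, Submodule.coe_subtype] at hab
      have hb : b = b' := by
        have h3 := congrArg N.mkQ hab
        rw [map_add, map_add, hπs, hπs, Submodule.mkQ_apply, Submodule.mkQ_apply,
          (Submodule.Quotient.mk_eq_zero N).mpr ha, (Submodule.Quotient.mk_eq_zero N).mpr ha',
          zero_add, zero_add] at h3
        exact h3
      subst hb
      have : a = a' := by simpa using hab
      simp [this]
    · intro x
      refine ⟨⟨⟨x - s (N.mkQ x), ?_⟩, N.mkQ x⟩, by simp [hφ]⟩
      rw [← Submodule.Quotient.mk_eq_zero, ← Submodule.mkQ_apply]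
      rw [map_sub, hπs, sub_self]
  set e := LinearEquiv.ofBijective φ hbij with he
  have hcne : (fun _ : Unit => c) default ≠ 0 := hc
  have hli : LinearIndependent ℤ (fun _ : Unit => c) := LinearIndependent.of_subsingleton () hcne
  have hrange : Submodule.span ℤ (Set.range fun _ : Unit => c) = N := by
    rw [Set.range_const, hN]
  set bN : Module.Basis Unit ℤ N := (Module.Basis.span hli).map (LinearEquiv.ofEq _ _ hrange) with hbN
  set bQ := Module.Free.chooseBasis ℤ ((Fin n → ℤ) ⧸ N) with hbQ
  set B0 : Module.Basis (Unit ⊕ _) ℤ (Fin n → ℤ) := (bN.prod bQ).map e with hB0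
  have hcard : Fintype.card (Unit ⊕ Module.Free.ChooseBasisIndex ℤ ((Fin n → ℤ) ⧸ N)) = n := by
    rw [← Module.finrank_eq_card_basis B0]
    simp [Module.finrank_pi]
  set σ := Fintype.equivFinOfCardEq hcard with hσ
  set B := B0.reindex (σ.trans (Equiv.swap (σ (Sum.inl ())) i0)) with hB
  have hB00 : B i0 = c := by
    rw [hB, Module.Basis.reindex_apply]
    have h4 : (σ.trans (Equiv.swap (σ (Sum.inl ())) i0)).symm i0 = Sum.inl () := by
      simp [Equiv.symm_apply_eq, Equiv.swap_apply_right]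
    rw [h4, hB0, Module.Basis.map_apply]
    have h5 : (bN.prod bQ) (Sum.inl ()) = (bN (), 0) := by
      ext <;> simp [Module.Basis.prod_apply]
    rw [h5]
    show φ _ = c
    simp [hφ, hbN, Module.Basis.span_apply]
  refine ⟨(Pi.basisFun ℤ (Fin n)).toMatrix B, ?_, fun i => ?_⟩
  · haveI := (Pi.basisFun ℤ (Fin n)).invertibleToMatrix B
    exact Matrix.isUnit_det_of_invertible _
  · rw [Module.Basis.toMatrix_apply, Pi.basisFun_repr, hB00]


open scoped MatrixOrder in
lemma mink {n : ℕ} (hn : 1 ≤ n) (T : Matrix (Fin n) (Fin n) ℝ) (hT : T.PosDef) :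
    ∃ c : Fin n → ℤ, c ≠ 0 ∧
      (fun i => (c i : ℝ)) ⬝ᵥ T *ᵥ (fun i => (c i : ℝ)) ≤ (4 * n) * T.det ^ ((1:ℝ)/n) := by
  classical
  have hnR : (0:ℝ) < n := by positivity
  set P := CFC.sqrt T with hPdef
  have hPP : P * P = T := CFC.sqrt_mul_sqrt_self T hT.posSemidef.nonneg
  have hPt : Pᵀ = P := by
    have := (CFC.sqrt_nonneg T).posSemidef.isHermitian
    rw [Matrix.IsHermitian, Matrix.conjTranspose_eq_transpose_of_trivial] at this
    exact this
  have hd : (0:ℝ) < T.det := hT.det_pos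
  have hdetP : P.det * P.det = T.det := by rw [← Matrix.det_mul, hPP]
  have hdP : P.det ≠ 0 := by
    intro h; rw [h, mul_zero] at hdetP; exact (ne_of_gt hd) hdetP.symm
  haveI : Invertible P := P.invertibleOfIsUnitDet (isUnit_iff_ne_zero.mpr hdP)
  set b : Module.Basis (Fin n) ℝ (Fin n → ℝ) :=
    (Pi.basisFun ℝ (Fin n)).map (P.toLinearEquiv' ‹Invertible P›) with hb
  have hbapp : ∀ i, b i = Pᵀ i := by
    intro i
    rw [hb, Module.Basis.map_apply, Pi.basisFun_apply]
    show Matrix.toLin' P _ = _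
    rw [Matrix.toLin'_apply]
    exact Matrix.mulVec_single_one P i
  set d := T.det with hdd
  set s0 : ℝ := d ^ ((1:ℝ)/n) with hs0
  have hs0pos : 0 < s0 := Real.rpow_pos_of_pos hd _
  set r : ℝ := 2 * Real.sqrt s0 with hr
  have hrpos : 0 < r := by positivity
  have hs0n : s0 ^ n = d := by
    rw [hs0, ← Real.rpow_natCast (d ^ ((1:ℝ)/n)) n, ← Real.rpow_mul hd.le,
      one_div, inv_mul_cancel₀ (ne_of_gt hnR), Real.rpow_one]
  have h_fund := ZSpan.isAddFundamentalDomain' b volume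
  have : Countable (span ℤ (Set.range b)).toAddSubgroup := by
    change Countable (span ℤ (Set.range b)); infer_instance
  have hmat : (Matrix.of ⇑b) = Pᵀ := by
    ext i j
    rw [Matrix.of_apply, hbapp i]
  have hvolF : volume (ZSpan.fundamentalDomain b) = ENNReal.ofReal |P.det| := by
    rw [ZSpan.volume_fundamentalDomain, hmat, Matrix.det_transpose]
  have hvolS : volume (Metric.ball (0 : Fin n → ℝ) r) = ENNReal.ofReal ((2*r)^n) := by
    rw [Real.volume_pi_ball _ hrpos]
    simp
  have hineq : volume (ZSpan.fundamentalDomain b) * 2 ^ (Module.finrank ℝ (Fin n → ℝ))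
      < volume (Metric.ball (0 : Fin n → ℝ) r) := by
    rw [hvolF, hvolS]
    have hfr : Module.finrank ℝ (Fin n → ℝ) = n := by simp
    rw [hfr]
    have habs : |P.det| = Real.sqrt d := by
      rw [← Real.sqrt_sq_eq_abs]
      congr 1
      rw [sq]; exact hdetP
    have hrn : (2*r)^n = 4^n * (Real.sqrt s0)^n := by
      rw [hr]; ring
    have hsq : (Real.sqrt s0)^n = Real.sqrt d := by
      have h2 : ((Real.sqrt s0)^n)^2 = d := by
        rw [← pow_mul, mul_comm n 2, pow_mul, Real.sq_sqrt hs0pos.le, hs0n]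
      rw [← h2, Real.sqrt_sq (by positivity)]
    rw [habs, hrn, hsq]
    calc ENNReal.ofReal (Real.sqrt d) * 2^n
        = ENNReal.ofReal (2^n * Real.sqrt d) := by
          rw [mul_comm, ENNReal.ofReal_mul (by positivity), ENNReal.ofReal_pow (by norm_num)]
          norm_num
      _ < ENNReal.ofReal (4^n * Real.sqrt d) := by
          rw [ENNReal.ofReal_lt_ofReal_iff (by positivity)]
          have h5 : (0:ℝ) < Real.sqrt d := Real.sqrt_pos.mpr hd
          have h4 : (2:ℝ)^n < 4^n := by
            apply pow_lt_pow_left₀ (by norm_num) (by norm_num)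
            omega
          nlinarith
  obtain ⟨⟨v, hv⟩, h_nz, h_mem⟩ := exists_ne_zero_mem_lattice_of_measure_mul_two_pow_lt_measure
    h_fund (fun x hx => by
      rw [mem_ball_zero_iff] at *
      simpa using hx)
    (convex_ball 0 r) hineq
  rw [mem_toAddSubgroup] at hv
  obtain ⟨c, hc⟩ := (mem_span_range_iff_exists_fun ℤ).mp hv
  have hvc : v = P *ᵥ (fun i => (c i : ℝ)) := by
    rw [← hc]
    ext j
    simp only [Finset.sum_apply, Pi.smul_apply]
    rw [Finset.sum_congr rfl (fun i _ => by rw [hbapp i])]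
    simp [Matrix.mulVec, dotProduct, Matrix.transpose_apply, mul_comm]
  have hcne : c ≠ 0 := by
    intro h0
    apply h_nz
    apply Subtype.ext
    show v = 0
    rw [hvc, h0]
    ext j
    simp [Matrix.mulVec, dotProduct]
  refine ⟨c, hcne, ?_⟩
  set x : Fin n → ℝ := fun i => (c i : ℝ) with hx
  have hQ : x ⬝ᵥ T *ᵥ x = ∑ j, v j * v j := by
    rw [← hPP, ← Matrix.mulVec_mulVec, Matrix.dotProduct_mulVec]
    have h7 : x ᵥ* P = P *ᵥ x := by
      conv_lhs => rw [← hPt]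
      rw [Matrix.vecMul_transpose]
    rw [h7, ← hvc]
    rfl
  rw [hQ]
  have hvj : ∀ j, v j * v j ≤ r^2 := by
    intro j
    have h1 : ‖v‖ < r := by simpa using mem_ball_zero_iff.mp h_mem
    have h2 : |v j| ≤ ‖v‖ := by simpa using norm_le_pi_norm v j
    have h3 := abs_le.mp (le_of_lt (lt_of_le_of_lt h2 h1))
    nlinarith [h3.1, h3.2]
  calc ∑ j, v j * v j ≤ ∑ _j : Fin n, r^2 := Finset.sum_le_sum (fun j _ => hvj j)
    _ = n * r^2 := by simp [mul_comm]
    _ ≤ (4*n) * d ^ ((1:ℝ)/n) := by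
        have h6 : r^2 = 4 * s0 := by
          rw [hr, mul_pow, sq (Real.sqrt s0), Real.mul_self_sqrt hs0pos.le]
          norm_num
        rw [h6, hs0]
        exact le_of_eq (by ring)

-- primitive vector extension

lemma sl_col {n : ℕ} (hn : 1 ≤ n) (c : Fin n → ℤ) (hc : c ≠ 0)
    (hprim : Finset.univ.gcd c = 1) :
    ∃ γ : Matrix.SpecialLinearGroup (Fin n) ℤ, ∃ ε : ℤ, (ε = 1 ∨ ε = -1) ∧
      ∀ i, (γ : Matrix (Fin n) (Fin n) ℤ) i ⟨0, hn⟩ = ε * c i := by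
  classical
  obtain ⟨M, hMu, hMc⟩ := prim_ext hn c hc hprim
  set i0 : Fin n := ⟨0, hn⟩ with hi0
  rcases Int.isUnit_iff.mp hMu with h1 | h1
  · exact ⟨⟨M, h1⟩, 1, Or.inl rfl, fun i => by simpa using hMc i⟩
  · set M' := M.updateCol i0 (fun i => -(M i i0)) with hM'
    have hdet : M'.det = 1 := by
      have : (fun i => -(M i i0)) = (-1 : ℤ) • (fun i => M i i0) := by
        funext i; simp
      rw [hM', this, Matrix.det_updateCol_smul, Matrix.updateCol_eq_self, h1]
      ring
    refine ⟨⟨M', hdet⟩, -1, Or.inr rfl, fun i => ?_⟩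
    show M' i i0 = -1 * c i
    rw [hM', Matrix.updateCol_self, hMc i]
    ring

theorem stmt_13 (n : ℕ) (hn : 1 ≤ n) :
    ∃ B : ℝ, 0 < B ∧ ∀ T : Matrix (Fin n) (Fin n) ℝ, T.PosDef →
      ∃ γ : Matrix.SpecialLinearGroup (Fin n) ℤ,
        (((γ : Matrix (Fin n) (Fin n) ℤ).map (fun a : ℤ => (a : ℝ)))ᵀ * T *
            ((γ : Matrix (Fin n) (Fin n) ℤ).map (fun a : ℤ => (a : ℝ)))) ⟨0, hn⟩ ⟨0, hn⟩
          ≤ B * T.det ^ ((1 : ℝ) / n) := by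
  classical
  have hnR : (0:ℝ) < n := by
    have : (1:ℝ) ≤ n := by exact_mod_cast hn
    linarith
  refine ⟨4 * n, by linarith, fun T hT => ?_⟩
  set i0 : Fin n := ⟨0, hn⟩ with hi0
  obtain ⟨c, hcne, hcQ⟩ := mink hn T hT
  -- gcd reduction
  set g : ℤ := Finset.univ.gcd c with hg
  obtain ⟨j0, hj0⟩ := Function.ne_iff.mp hcne
  have hgdvd : ∀ i, g ∣ c i := fun i => Finset.gcd_dvd (Finset.mem_univ i)
  have hgne : g ≠ 0 := by
    intro h
    exact hj0 (by simpa using (Finset.gcd_eq_zero_iff.mp (hg ▸ h)) j0 (Finset.mem_univ j0))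
  have hgpos : 1 ≤ g := by
    have : 0 ≤ g := by
      exact Int.nonneg_of_normalize_eq_self (hg ▸ Finset.normalize_gcd)
    omega
  set c' : Fin n → ℤ := fun i => c i / g with hc'
  have hcc' : ∀ i, c i = g * c' i := fun i => (Int.mul_ediv_cancel' (hgdvd i)).symm
  have hc'ne : c' ≠ 0 := by
    intro h
    apply hj0
    rw [hcc' j0, congrFun h j0]
    simp
  have hprim : Finset.univ.gcd c' = 1 := by
    rw [hc', hg]
    exact Finset.gcd_div_eq_one (Finset.mem_univ j0) hj0
  obtain ⟨γ, ε, hε, hγ⟩ := sl_col hn c' hc'ne hprim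
  refine ⟨γ, ?_⟩
  -- express the matrix entry as a quadratic form
  set A : Matrix (Fin n) (Fin n) ℝ := (γ : Matrix (Fin n) (Fin n) ℤ).map (fun a : ℤ => (a:ℝ))
    with hA
  set y : Fin n → ℝ := fun i => A i i0 with hy
  have hentry : (Aᵀ * T * A) i0 i0 = y ⬝ᵥ T *ᵥ y := by
    simp only [Matrix.mul_apply, Matrix.transpose_apply, dotProduct, Matrix.mulVec,
      Finset.sum_mul, Finset.mul_sum]
    rw [Finset.sum_comm]
    refine Finset.sum_congr rfl fun i _ => Finset.sum_congr rfl fun k _ => by ring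
  rw [hentry]
  -- y = ε • x'
  set x' : Fin n → ℝ := fun i => (c' i : ℝ) with hx'
  have hyx' : y = (ε : ℝ) • x' := by
    funext i
    rw [hy, hA]
    simp only [Matrix.map_apply, Pi.smul_apply, smul_eq_mul, hx']
    rw [hγ i]
    push_cast
    ring
  have hQy : y ⬝ᵥ T *ᵥ y = x' ⬝ᵥ T *ᵥ x' := by
    have hee : (ε:ℝ) * ε = 1 := by rcases hε with h | h <;> rw [h] <;> norm_num
    rw [hyx', Matrix.mulVec_smul, dotProduct_smul, smul_dotProduct,
      smul_smul, hee, one_smul]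
  rw [hQy]
  -- Q(c) = g^2 Q(x')
  have hcx' : (fun i => (c i : ℝ)) = (g : ℝ) • x' := by
    funext i
    simp only [Pi.smul_apply, smul_eq_mul, hx']
    rw [hcc' i]
    push_cast
    ring
  have hQc : (fun i => (c i : ℝ)) ⬝ᵥ T *ᵥ (fun i => (c i : ℝ))
      = (g:ℝ) * ((g:ℝ) * (x' ⬝ᵥ T *ᵥ x')) := by
    rw [hcx', Matrix.mulVec_smul, dotProduct_smul, smul_dotProduct,
      smul_smul, smul_eq_mul, mul_assoc]
  have hQx'nonneg : 0 ≤ x' ⬝ᵥ T *ᵥ x' := by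
    have := hT.posSemidef.dotProduct_mulVec_nonneg x'
    simpa using this
  have hgR : (1:ℝ) ≤ (g:ℝ) := by exact_mod_cast hgpos
  have h1g : (1:ℝ) ≤ (g:ℝ)*(g:ℝ) := by nlinarith
  have hle : x' ⬝ᵥ T *ᵥ x' ≤ (fun i => (c i : ℝ)) ⬝ᵥ T *ᵥ (fun i => (c i : ℝ)) := by
    rw [hQc]
    calc x' ⬝ᵥ T *ᵥ x' = 1 * (x' ⬝ᵥ T *ᵥ x') := (one_mul _).symm
      _ ≤ ((g:ℝ)*(g:ℝ)) * (x' ⬝ᵥ T *ᵥ x') := mul_le_mul_of_nonneg_right h1g hQx'nonneg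
      _ = (g:ℝ) * ((g:ℝ) * (x' ⬝ᵥ T *ᵥ x')) := by ring
  linarith
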